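/- Let m, n be positive integers with 3 | mn. Then the number of tromino tilings of R(m,n) is at most 2^(mn/3) times the number of monodic tilings of R(m,n); this follows because each tromino tiling maps injectively to a directed monodic tiling (each L-tromino being replaced by a domino, carrying one of two possible directions, together with a monomino). -/

import Mathlib

/-- The m×n rectangle: cells {0,…,m−1}×{0,…,n−1}. -/
def rect (m n : ℕ) : Finset (ℕ × ℕ) := Finset.range m ×ˢ Finset.range n

/-- The 2×2 block with top-left corner (i,j). -/
def block (i j : ℕ) : Finset (ℕ × ℕ) :=
  {(i, j), (i, j + 1), (i + 1, j), (i + 1, j + 1)}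

/-- An L-tromino: a 2×2 block minus one of its cells. -/
def IsLTromino (T : Finset (ℕ × ℕ)) : Prop :=
  ∃ i j c, c ∈ block i j ∧ T = block i j \ {c}

/-- A tromino tiling of R(m,n): a partition of the rectangle into L-trominoes. -/
def IsTrominoTiling (m n : ℕ) (𝒯 : Finset (Finset (ℕ × ℕ))) : Prop :=
  (∀ T ∈ 𝒯, IsLTromino T) ∧
  (∀ T₁ ∈ 𝒯, ∀ T₂ ∈ 𝒯, T₁ ≠ T₂ → Disjoint T₁ T₂) ∧
  𝒯.sup id = rect m n

/-- Tile T crosses the i-th horizontal grid line. -/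
def CrossesH (T : Finset (ℕ × ℕ)) (i : ℕ) : Prop :=
  (∃ c ∈ T, c.1 < i) ∧ (∃ c ∈ T, i ≤ c.1)

/-- Tile T crosses the j-th vertical grid line. -/
def CrossesV (T : Finset (ℕ × ℕ)) (j : ℕ) : Prop :=
  (∃ c ∈ T, c.2 < j) ∧ (∃ c ∈ T, j ≤ c.2)

/-- A tiling of R(m,n) is faultfree if every interior horizontal and vertical
grid line is crossed by some tile. -/
def IsFaultfree (m n : ℕ) (𝒯 : Finset (Finset (ℕ × ℕ))) : Prop :=
  (∀ i, 0 < i → i < m → ∃ T ∈ 𝒯, CrossesH T i) ∧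
  (∀ j, 0 < j → j < n → ∃ T ∈ 𝒯, CrossesV T j)

open Classical in
/-- The number of tiles of 𝒯 crossing the i-th horizontal grid line. -/
noncomputable def crossCountH (𝒯 : Finset (Finset (ℕ × ℕ))) (i : ℕ) : ℕ :=
  (𝒯.filter fun T => CrossesH T i).card

open Classical in
/-- The number of tiles of 𝒯 crossing the j-th vertical grid line. -/
noncomputable def crossCountV (𝒯 : Finset (Finset (ℕ × ℕ))) (j : ℕ) : ℕ :=
  (𝒯.filter fun T => CrossesV T j).card

/-- A domino: two horizontally or vertically adjacent cells. -/
def IsDomino (T : Finset (ℕ × ℕ)) : Prop :=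
  ∃ i j, T = ({(i, j), (i, j + 1)} : Finset (ℕ × ℕ)) ∨
         T = ({(i, j), (i + 1, j)} : Finset (ℕ × ℕ))

/-- A monomino: a single cell. -/
def IsMonomino (T : Finset (ℕ × ℕ)) : Prop := ∃ c, T = {c}

/-- A domino tiling of R(m,n): a partition of the rectangle into dominoes. -/
def IsDominoTiling (m n : ℕ) (𝒯 : Finset (Finset (ℕ × ℕ))) : Prop :=
  (∀ T ∈ 𝒯, IsDomino T) ∧
  (∀ T₁ ∈ 𝒯, ∀ T₂ ∈ 𝒯, T₁ ≠ T₂ → Disjoint T₁ T₂) ∧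
  𝒯.sup id = rect m n

open Classical in
/-- A monodic tiling of R(m,n) (for 3 ∣ mn): a partition of the rectangle into
exactly mn/3 dominoes and mn/3 monominoes. -/
def IsMonodicTiling (m n : ℕ) (𝒯 : Finset (Finset (ℕ × ℕ))) : Prop :=
  (∀ T ∈ 𝒯, IsDomino T ∨ IsMonomino T) ∧
  (∀ T₁ ∈ 𝒯, ∀ T₂ ∈ 𝒯, T₁ ≠ T₂ → Disjoint T₁ T₂) ∧
  𝒯.sup id = rect m n ∧
  (𝒯.filter fun T => IsDomino T).card = m * n / 3 ∧
  (𝒯.filter fun T => IsMonomino T).card = m * n / 3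

namespace Trom
open Classical

noncomputable def dSplit (T : Finset (ℕ × ℕ)) : Finset (ℕ × ℕ) :=
  T.filter (fun p => ∃ q ∈ T, q.1 = p.1 ∧ (q.2 = p.2 + 1 ∨ q.2 + 1 = p.2))

noncomputable def mSplit (T : Finset (ℕ × ℕ)) : Finset (ℕ × ℕ) := T \ dSplit T

def bitLeft (T : Finset (ℕ × ℕ)) : Prop :=
  ∀ p ∈ mSplit T, ∀ q ∈ dSplit T, p.2 ≤ q.2

lemma dSplit_subset (T : Finset (ℕ × ℕ)) : dSplit T ⊆ T := Finset.filter_subset _ _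
lemma mSplit_subset (T : Finset (ℕ × ℕ)) : mSplit T ⊆ T := Finset.sdiff_subset
lemma disj_split (T : Finset (ℕ × ℕ)) : Disjoint (dSplit T) (mSplit T) :=
  Finset.disjoint_sdiff
lemma union_split (T : Finset (ℕ × ℕ)) : dSplit T ∪ mSplit T = T :=
  Finset.union_sdiff_of_subset (dSplit_subset T)


lemma bit_iff {T : Finset (ℕ×ℕ)} {a b r c : ℕ} (hd : dSplit T = {(a,b),(a,b+1)})
    (hm : mSplit T = {(r,c)}) (hc : c = b ∨ c = b+1) : bitLeft T ↔ c = b := by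
  constructor
  · intro hb
    have h1 := hb (r,c) (by rw [hm]; simp) (a,b) (by rw [hd]; simp)
    simp only [] at h1
    omega
  · intro h
    intro p hp q hq
    rw [hm, Finset.mem_singleton] at hp
    rw [hd] at hq
    subst hp
    simp only [Finset.mem_insert, Finset.mem_singleton] at hq
    rcases hq with h2 | h2 <;> subst h2 <;> simp <;> omega

/-- The structural workhorse. -/
lemma split_struct {T : Finset (ℕ × ℕ)} (h : IsLTromino T) :
    ∃ a b r c, dSplit T = {(a, b), (a, b + 1)} ∧ mSplit T = {(r, c)} ∧
      (r + 1 = a ∨ r = a + 1) ∧ (c = b ∨ c = b + 1) ∧ (bitLeft T ↔ c = b) := by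
  obtain ⟨i, j, cc, hc, hT⟩ := h
  simp only [block, Finset.mem_insert, Finset.mem_singleton] at hc
  rcases hc with h1 | h1 | h1 | h1 <;> subst h1
  · -- missing (i,j): T = {(i,j+1),(i+1,j),(i+1,j+1)}
    have hT' : T = {(i, j+1), (i+1, j), (i+1, j+1)} := by
      subst hT; ext ⟨a, b⟩; simp [block, Prod.ext_iff]; omega
    have hd : dSplit T = {(i+1, j), (i+1, j+1)} := by
      rw [hT']; ext ⟨a, b⟩
      simp only [dSplit, Finset.mem_filter, Finset.mem_insert, Finset.mem_singleton,
        Prod.ext_iff, Prod.exists]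
      constructor
      · rintro ⟨h1, q1, q2, hq, h3, h4⟩ <;> simp_all <;> omega
      · rintro (⟨ha, hb⟩ | ⟨ha, hb⟩)
        · exact ⟨by omega, i+1, j+1, by simp, by omega, by omega⟩
        · exact ⟨by omega, i+1, j, by simp, by omega, by omega⟩
    have hm : mSplit T = {(i, j+1)} := by
      rw [mSplit, hd, hT']; ext ⟨a, b⟩; simp [Prod.ext_iff]; try omega
    exact ⟨i+1, j, i, j+1, hd, hm, by omega, by omega, bit_iff hd hm (by omega)⟩
  · -- missing (i,j+1): T = {(i,j),(i+1,j),(i+1,j+1)}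
    have hT' : T = {(i, j), (i+1, j), (i+1, j+1)} := by
      subst hT; ext ⟨a, b⟩; simp [block, Prod.ext_iff]; omega
    have hd : dSplit T = {(i+1, j), (i+1, j+1)} := by
      rw [hT']; ext ⟨a, b⟩
      simp only [dSplit, Finset.mem_filter, Finset.mem_insert, Finset.mem_singleton,
        Prod.ext_iff, Prod.exists]
      constructor
      · rintro ⟨h1, q1, q2, hq, h3, h4⟩ <;> simp_all <;> omega
      · rintro (⟨ha, hb⟩ | ⟨ha, hb⟩)
        · exact ⟨by omega, i+1, j+1, by simp, by omega, by omega⟩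
        · exact ⟨by omega, i+1, j, by simp, by omega, by omega⟩
    have hm : mSplit T = {(i, j)} := by
      rw [mSplit, hd, hT']; ext ⟨a, b⟩; simp [Prod.ext_iff]; try omega
    exact ⟨i+1, j, i, j, hd, hm, by omega, by omega, bit_iff hd hm (by omega)⟩
  · -- missing (i+1,j): T = {(i,j),(i,j+1),(i+1,j+1)}
    have hT' : T = {(i, j), (i, j+1), (i+1, j+1)} := by
      subst hT; ext ⟨a, b⟩; simp [block, Prod.ext_iff]; omega
    have hd : dSplit T = {(i, j), (i, j+1)} := by
      rw [hT']; ext ⟨a, b⟩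
      simp only [dSplit, Finset.mem_filter, Finset.mem_insert, Finset.mem_singleton,
        Prod.ext_iff, Prod.exists]
      constructor
      · rintro ⟨h1, q1, q2, hq, h3, h4⟩ <;> simp_all <;> omega
      · rintro (⟨ha, hb⟩ | ⟨ha, hb⟩)
        · exact ⟨by omega, i, j+1, by simp, by omega, by omega⟩
        · exact ⟨by omega, i, j, by simp, by omega, by omega⟩
    have hm : mSplit T = {(i+1, j+1)} := by
      rw [mSplit, hd, hT']; ext ⟨a, b⟩; simp [Prod.ext_iff]; try omega
    exact ⟨i, j, i+1, j+1, hd, hm, by omega, by omega, bit_iff hd hm (by omega)⟩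
  · -- missing (i+1,j+1): T = {(i,j),(i,j+1),(i+1,j)}
    have hT' : T = {(i, j), (i, j+1), (i+1, j)} := by
      subst hT; ext ⟨a, b⟩; simp [block, Prod.ext_iff]; omega
    have hd : dSplit T = {(i, j), (i, j+1)} := by
      rw [hT']; ext ⟨a, b⟩
      simp only [dSplit, Finset.mem_filter, Finset.mem_insert, Finset.mem_singleton,
        Prod.ext_iff, Prod.exists]
      constructor
      · rintro ⟨h1, q1, q2, hq, h3, h4⟩ <;> simp_all <;> omega
      · rintro (⟨ha, hb⟩ | ⟨ha, hb⟩)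
        · exact ⟨by omega, i, j+1, by simp, by omega, by omega⟩
        · exact ⟨by omega, i, j, by simp, by omega, by omega⟩
    have hm : mSplit T = {(i+1, j)} := by
      rw [mSplit, hd, hT']; ext ⟨a, b⟩; simp [Prod.ext_iff]; try omega
    exact ⟨i, j, i+1, j, hd, hm, by omega, by omega, bit_iff hd hm (by omega)⟩



lemma card_domino {d : Finset (ℕ × ℕ)} (h : IsDomino d) : d.card = 2 := by
  obtain ⟨i, j, h | h⟩ := h <;> subst h <;>
    rw [Finset.card_insert_of_notMem (by simp), Finset.card_singleton]

lemma card_mono {d : Finset (ℕ × ℕ)} (h : IsMonomino d) : d.card = 1 := by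
  obtain ⟨c, rfl⟩ := h; simp

lemma dSplit_isDomino {T : Finset (ℕ × ℕ)} (h : IsLTromino T) : IsDomino (dSplit T) := by
  obtain ⟨a, b, r, c, hd, -⟩ := split_struct h
  exact ⟨a, b, Or.inl hd⟩

lemma mSplit_isMonomino {T : Finset (ℕ × ℕ)} (h : IsLTromino T) : IsMonomino (mSplit T) := by
  obtain ⟨a, b, r, c, -, hm, -⟩ := split_struct h
  exact ⟨(r, c), hm⟩

lemma card_dSplit {T : Finset (ℕ × ℕ)} (h : IsLTromino T) : (dSplit T).card = 2 :=
  card_domino (dSplit_isDomino h)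

lemma card_mSplit {T : Finset (ℕ × ℕ)} (h : IsLTromino T) : (mSplit T).card = 1 :=
  card_mono (mSplit_isMonomino h)

lemma card_tromino {T : Finset (ℕ × ℕ)} (h : IsLTromino T) : T.card = 3 := by
  have h1 := union_split T
  have h2 := disj_split T
  have := Finset.card_union_of_disjoint h2
  rw [h1] at this
  rw [this, card_dSplit h, card_mSplit h]

noncomputable def Mset (A : Finset (Finset (ℕ × ℕ))) : Finset (Finset (ℕ × ℕ)) :=
  A.biUnion (fun T => {dSplit T, mSplit T})

noncomputable def Sset (A : Finset (Finset (ℕ × ℕ))) : Finset (Finset (ℕ × ℕ)) :=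
  (A.filter bitLeft).image dSplit

lemma dSplit_nonempty {T : Finset (ℕ × ℕ)} (h : IsLTromino T) : (dSplit T).Nonempty :=
  Finset.card_pos.mp (by rw [card_dSplit h]; omega)

lemma mSplit_nonempty {T : Finset (ℕ × ℕ)} (h : IsLTromino T) : (mSplit T).Nonempty :=
  Finset.card_pos.mp (by rw [card_mSplit h]; omega)



lemma not_mono_of_domino {d : Finset (ℕ × ℕ)} (h : IsDomino d) : ¬ IsMonomino d := by
  intro h2
  have := card_domino h
  have := card_mono h2
  omega

section
variable {m n : ℕ} {A : Finset (Finset (ℕ × ℕ))}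

lemma tile_eq_of_mem (hA : IsTrominoTiling m n A) {T T' : Finset (ℕ × ℕ)} {x : ℕ × ℕ}
    (hT : T ∈ A) (hT' : T' ∈ A) (hx : x ∈ T) (hx' : x ∈ T') : T = T' := by
  by_contra h
  exact Finset.disjoint_left.mp (hA.2.1 T hT T' hT' h) hx hx'

lemma dSplit_injOn (hA : IsTrominoTiling m n A) {T T' : Finset (ℕ × ℕ)}
    (hT : T ∈ A) (hT' : T' ∈ A) (h : dSplit T = dSplit T') : T = T' := by
  obtain ⟨x, hx⟩ := dSplit_nonempty (hA.1 T hT)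
  exact tile_eq_of_mem hA hT hT' (dSplit_subset T hx) (dSplit_subset T' (h ▸ hx))

lemma mSplit_injOn (hA : IsTrominoTiling m n A) {T T' : Finset (ℕ × ℕ)}
    (hT : T ∈ A) (hT' : T' ∈ A) (h : mSplit T = mSplit T') : T = T' := by
  obtain ⟨x, hx⟩ := mSplit_nonempty (hA.1 T hT)
  exact tile_eq_of_mem hA hT hT' (mSplit_subset T hx) (mSplit_subset T' (h ▸ hx))

lemma mem_Mset_iff {x : Finset (ℕ × ℕ)} :
    x ∈ Mset A ↔ ∃ T ∈ A, x = dSplit T ∨ x = mSplit T := by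
  simp [Mset]

lemma dSplit_mem_Mset {T : Finset (ℕ × ℕ)} (hT : T ∈ A) : dSplit T ∈ Mset A :=
  mem_Mset_iff.mpr ⟨T, hT, Or.inl rfl⟩

lemma mSplit_mem_Mset {T : Finset (ℕ × ℕ)} (hT : T ∈ A) : mSplit T ∈ Mset A :=
  mem_Mset_iff.mpr ⟨T, hT, Or.inr rfl⟩

lemma domino_mem_Mset (hA : IsTrominoTiling m n A) {d : Finset (ℕ × ℕ)}
    (hd : d ∈ Mset A) (h2 : IsDomino d) : ∃ T ∈ A, dSplit T = d := by
  obtain ⟨T, hT, h | h⟩ := mem_Mset_iff.mp hd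
  · exact ⟨T, hT, h.symm⟩
  · exfalso
    have := card_mSplit (hA.1 T hT)
    have := card_domino h2
    rw [h] at this
    omega

lemma mono_mem_Mset (hA : IsTrominoTiling m n A) {x : Finset (ℕ × ℕ)}
    (hx : x ∈ Mset A) (h2 : IsMonomino x) : ∃ T ∈ A, mSplit T = x := by
  obtain ⟨T, hT, h | h⟩ := mem_Mset_iff.mp hx
  · exfalso
    have := card_dSplit (hA.1 T hT)
    have := card_mono h2
    rw [h] at this
    omega
  · exact ⟨T, hT, h.symm⟩

lemma Mset_pairwiseDisjoint (hA : IsTrominoTiling m n A) :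
    ∀ X ∈ Mset A, ∀ Y ∈ Mset A, X ≠ Y → Disjoint X Y := by
  intro X hX Y hY hne
  obtain ⟨T, hT, hX'⟩ := mem_Mset_iff.mp hX
  obtain ⟨T', hT', hY'⟩ := mem_Mset_iff.mp hY
  by_cases hTT : T = T'
  · subst hTT
    rcases hX' with rfl | rfl <;> rcases hY' with rfl | rfl
    · exact absurd rfl hne
    · exact disj_split T
    · exact (disj_split T).symm
    · exact absurd rfl hne
  · have hdisj := hA.2.1 T hT T' hT' hTT
    have hXs : X ⊆ T := by rcases hX' with rfl | rfl; exacts [dSplit_subset T, mSplit_subset T]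
    have hYs : Y ⊆ T' := by rcases hY' with rfl | rfl; exacts [dSplit_subset T', mSplit_subset T']
    exact hdisj.mono hXs hYs

lemma Mset_sup (hA : IsTrominoTiling m n A) : (Mset A).sup id = rect m n := by
  rw [Mset, Finset.sup_biUnion]
  rw [← hA.2.2]
  apply Finset.sup_congr rfl
  intro T hT
  simp only [Finset.sup_insert, Finset.sup_singleton, id]
  exact union_split T

lemma Mset_filter_domino (hA : IsTrominoTiling m n A) :
    ((Mset A).filter fun X => IsDomino X) = A.image dSplit := by
  ext x
  simp only [Finset.mem_filter, Finset.mem_image, mem_Mset_iff]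
  constructor
  · rintro ⟨⟨T, hT, rfl | rfl⟩, hd⟩
    · exact ⟨T, hT, rfl⟩
    · exact absurd (mSplit_isMonomino (hA.1 T hT)) (not_mono_of_domino hd)
  · rintro ⟨T, hT, rfl⟩
    exact ⟨⟨T, hT, Or.inl rfl⟩, dSplit_isDomino (hA.1 T hT)⟩

lemma Mset_filter_mono (hA : IsTrominoTiling m n A) :
    ((Mset A).filter fun X => IsMonomino X) = A.image mSplit := by
  ext x
  simp only [Finset.mem_filter, Finset.mem_image, mem_Mset_iff]
  constructor
  · rintro ⟨⟨T, hT, rfl | rfl⟩, hd⟩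
    · exact absurd hd (not_mono_of_domino (dSplit_isDomino (hA.1 T hT)))
    · exact ⟨T, hT, rfl⟩
  · rintro ⟨T, hT, rfl⟩
    exact ⟨⟨T, hT, Or.inr rfl⟩, mSplit_isMonomino (hA.1 T hT)⟩

lemma card_tiling (hA : IsTrominoTiling m n A) : 3 * A.card = m * n := by
  have h1 : A.sup id = A.biUnion id := Finset.sup_eq_biUnion A id
  have h2 : (A.biUnion id).card = ∑ T ∈ A, T.card := by
    apply Finset.card_biUnion
    intro T hT T' hT' hne
    exact hA.2.1 T hT T' hT' hne
  have h3 : ∑ T ∈ A, T.card = 3 * A.card := by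
    rw [Finset.sum_congr rfl (fun T hT => card_tromino (hA.1 T hT)), Finset.sum_const,
      smul_eq_mul, mul_comm]
  have h4 : (rect m n).card = m * n := by
    simp [rect]
  rw [← h3, ← h2, ← h1, hA.2.2, h4]

lemma Mset_monodic (hA : IsTrominoTiling m n A) : IsMonodicTiling m n (Mset A) := by
  refine ⟨?_, Mset_pairwiseDisjoint hA, Mset_sup hA, ?_, ?_⟩
  · intro X hX
    obtain ⟨T, hT, rfl | rfl⟩ := mem_Mset_iff.mp hX
    · exact Or.inl (dSplit_isDomino (hA.1 T hT))
    · exact Or.inr (mSplit_isMonomino (hA.1 T hT))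
  · rw [Mset_filter_domino hA, Finset.card_image_of_injOn (fun T hT T' hT' => dSplit_injOn hA hT hT')]
    have := card_tiling hA
    omega
  · rw [Mset_filter_mono hA, Finset.card_image_of_injOn (fun T hT T' hT' => mSplit_injOn hA hT hT')]
    have := card_tiling hA
    omega

lemma pair_eq {a b a' b' : ℕ}
    (h : ({(a,b),(a,b+1)} : Finset (ℕ×ℕ)) = {(a',b'),(a',b'+1)}) : a = a' ∧ b = b' := by
  have h1 : (a,b) ∈ ({(a',b'),(a',b'+1)} : Finset (ℕ×ℕ)) := by rw [← h]; simp
  have h2 : (a,b+1) ∈ ({(a',b'),(a',b'+1)} : Finset (ℕ×ℕ)) := by rw [← h]; simp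
  simp only [Finset.mem_insert, Finset.mem_singleton, Prod.ext_iff] at h1 h2
  omega

lemma single_eq {r c r' c' : ℕ}
    (h : ({(r,c)} : Finset (ℕ×ℕ)) = {(r',c')}) : r = r' ∧ c = c' := by
  have h1 : (r,c) ∈ ({(r',c')} : Finset (ℕ×ℕ)) := by rw [← h]; simp
  simp only [Finset.mem_singleton, Prod.ext_iff] at h1
  exact h1

lemma mem_pair_col {a b c : ℕ} (hc : c = b ∨ c = b + 1) :
    (a, c) ∈ ({(a,b),(a,b+1)} : Finset (ℕ×ℕ)) := by
  rcases hc with rfl | rfl <;> simp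

lemma supRow_eq {T : Finset (ℕ×ℕ)} {a b r c : ℕ} (hd : dSplit T = {(a,b),(a,b+1)})
    (hm : mSplit T = {(r,c)}) : T.sup Prod.fst = max a r := by
  rw [← union_split T, hd, hm, Finset.sup_union]
  simp [Finset.sup_insert, Finset.sup_singleton]
  try omega

lemma bit_mp (hB : IsTrominoTiling m n B) (hS : Sset A = Sset B) {T T' : Finset (ℕ×ℕ)}
    (hT : T ∈ A) (hT' : T' ∈ B) (hd : dSplit T = dSplit T') (hb : bitLeft T) :
    bitLeft T' := by
  classical
  have h1 : dSplit T ∈ Sset B := by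
    rw [← hS, Sset]
    exact Finset.mem_image_of_mem _ (Finset.mem_filter.mpr ⟨hT, hb⟩)
  obtain ⟨T'', hT'', heq⟩ := Finset.mem_image.mp h1
  have hT''B : T'' ∈ B := (Finset.mem_filter.mp hT'').1
  have : T'' = T' := dSplit_injOn hB hT''B hT' (heq.trans hd)
  subst this
  exact (Finset.mem_filter.mp hT'').2

/-- The core descent step of the injectivity argument. -/
lemma core (hA : IsTrominoTiling m n A) {B : Finset (Finset (ℕ×ℕ))}
    (hB : IsTrominoTiling m n B) (hM : Mset A = Mset B) (hS : Sset A = Sset B) (k : ℕ)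
    (ih : ∀ j < k, ∀ T₂ : Finset (ℕ×ℕ),
      (T₂ ∈ A → T₂.sup Prod.fst ≤ j → T₂ ∈ B) ∧ (T₂ ∈ B → T₂.sup Prod.fst ≤ j → T₂ ∈ A))
    (T : Finset (ℕ×ℕ)) (hT : T ∈ A) (hk : T.sup Prod.fst ≤ k) : T ∈ B := by
  classical
  obtain ⟨a, b, r, c, hd, hm, hr, hc, hbit⟩ := split_struct (hA.1 T hT)
  have hdM : dSplit T ∈ Mset B := hM ▸ dSplit_mem_Mset hT
  obtain ⟨T', hT', hd'⟩ := domino_mem_Mset hB hdM (dSplit_isDomino (hA.1 T hT))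
  obtain ⟨a', b', r', c', hd2, hm2, hr', hc', hbit'⟩ := split_struct (hB.1 T' hT')
  have hab : a' = a ∧ b' = b := pair_eq (by rw [← hd2, hd', hd])
  obtain ⟨ha', hb'⟩ := hab
  have hbitT' : bitLeft T ↔ bitLeft T' :=
    ⟨bit_mp hB hS hT hT' hd'.symm, bit_mp hA hS.symm hT' hT hd'⟩
  have hcb : (c = b) ↔ (c' = b') := hbit.symm.trans (hbitT'.trans hbit')
  have hcc : c' = c := by omega
  by_cases hrr : r' = r
  · have : T = T' := by
      rw [← union_split T, ← union_split T', hd', hm, hm2, hrr, hcc]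
    exact this ▸ hT'
  · have hrcase : (r = a + 1 ∧ r' + 1 = a) ∨ (r + 1 = a ∧ r' = a + 1) := by omega
    have hsupT : T.sup Prod.fst = max a r := supRow_eq hd hm
    rcases hrcase with ⟨hr1, hr2⟩ | ⟨hr1, hr2⟩
    · -- T's mono below, T''s mono above; descend in A through the mono of T'
      have hmono : mSplit T' ∈ Mset A := hM.symm ▸ mSplit_mem_Mset hT'
      obtain ⟨T₂, hT₂, hm₂⟩ := mono_mem_Mset hA hmono (mSplit_isMonomino (hB.1 T' hT'))
      rw [hm2] at hm₂
      obtain ⟨a₂, b₂, r₂, c₂, hd₂2, hm₂2, hr₂, hc₂, -⟩ := split_struct (hA.1 T₂ hT₂)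
      obtain ⟨h₂₁, h₂₂⟩ : r₂ = r' ∧ c₂ = c' := single_eq (by rw [← hm₂2, hm₂])
      have hkey : (a₂, c₂) ∈ dSplit T₂ := hd₂2 ▸ mem_pair_col hc₂
      have hT₂T : T₂ ≠ T := by
        intro h
        rw [h, hm] at hm₂
        have := single_eq hm₂
        omega
      have ha₂ : r' = a₂ + 1 := by
        rcases hr₂ with h | h
        · exfalso
          have hxT : (a₂, c₂) ∈ dSplit T := by
            rw [hd]
            simp only [Finset.mem_insert, Finset.mem_singleton, Prod.ext_iff]
            omega
          exact hT₂T (tile_eq_of_mem hA hT₂ hT (dSplit_subset T₂ hkey)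
            (dSplit_subset T hxT))
        · omega
      have hsup₂ : T₂.sup Prod.fst = max a₂ r₂ := supRow_eq hd₂2 hm₂2
      have hlt : T₂.sup Prod.fst < k := by omega
      have hT₂B : T₂ ∈ B := (ih _ hlt T₂).1 hT₂ le_rfl
      exfalso
      have heqT : T₂ = T' := mSplit_injOn hB hT₂B hT' (by rw [hm₂2, hm2, h₂₁, h₂₂])
      have h5 : ({(a',b'),(a',b'+1)} : Finset (ℕ×ℕ)) = {(a₂,b₂),(a₂,b₂+1)} := by
        rw [← hd2, heqT.symm]; exact hd₂2
      have := pair_eq h5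
      omega
    · -- T's mono above, T''s mono below; descend in B through the mono of T
      have hmono : mSplit T ∈ Mset B := hM ▸ mSplit_mem_Mset hT
      obtain ⟨T₂, hT₂, hm₂⟩ := mono_mem_Mset hB hmono (mSplit_isMonomino (hA.1 T hT))
      rw [hm] at hm₂
      obtain ⟨a₂, b₂, r₂, c₂, hd₂2, hm₂2, hr₂, hc₂, -⟩ := split_struct (hB.1 T₂ hT₂)
      obtain ⟨h₂₁, h₂₂⟩ : r₂ = r ∧ c₂ = c := single_eq (by rw [← hm₂2, hm₂])
      have hkey : (a₂, c₂) ∈ dSplit T₂ := hd₂2 ▸ mem_pair_col hc₂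
      have hT₂T : T₂ ≠ T' := by
        intro h
        rw [h, hm2] at hm₂
        have := single_eq hm₂
        omega
      have ha₂ : r = a₂ + 1 := by
        rcases hr₂ with h | h
        · exfalso
          have hxT : (a₂, c₂) ∈ dSplit T' := by
            rw [hd2]
            simp only [Finset.mem_insert, Finset.mem_singleton, Prod.ext_iff]
            omega
          exact hT₂T (tile_eq_of_mem hB hT₂ hT' (dSplit_subset T₂ hkey)
            (dSplit_subset T' hxT))
        · omega
      have hsup₂ : T₂.sup Prod.fst = max a₂ r₂ := supRow_eq hd₂2 hm₂2
      have hlt : T₂.sup Prod.fst < k := by omega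
      have hT₂A : T₂ ∈ A := (ih _ hlt T₂).2 hT₂ le_rfl
      exfalso
      have heqT : T₂ = T := mSplit_injOn hA hT₂A hT (by rw [hm₂2, hm, h₂₁, h₂₂])
      have h5 : ({(a,b),(a,b+1)} : Finset (ℕ×ℕ)) = {(a₂,b₂),(a₂,b₂+1)} := by
        rw [← hd, heqT.symm]; exact hd₂2
      have := pair_eq h5
      omega

lemma eq_of_MS (hA : IsTrominoTiling m n A) {B : Finset (Finset (ℕ×ℕ))}
    (hB : IsTrominoTiling m n B) (hM : Mset A = Mset B) (hS : Sset A = Sset B) :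
    A = B := by
  have main : ∀ k : ℕ, ∀ T : Finset (ℕ×ℕ),
      (T ∈ A → T.sup Prod.fst ≤ k → T ∈ B) ∧ (T ∈ B → T.sup Prod.fst ≤ k → T ∈ A) := by
    intro k
    induction k using Nat.strong_induction_on with
    | _ k ihk =>
      intro T
      refine ⟨fun hT hk => ?_, fun hT hk => ?_⟩
      · exact core hA hB hM hS k (fun j hj T₂ => ihk j hj T₂) T hT hk
      · exact core hB hA hM.symm hS.symm k
          (fun j hj T₂ => ⟨(ihk j hj T₂).2, (ihk j hj T₂).1⟩) T hT hk
  apply Finset.Subset.antisymm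
  · intro T hT; exact (main (T.sup Prod.fst) T).1 hT le_rfl
  · intro T hT; exact (main (T.sup Prod.fst) T).2 hT le_rfl

lemma Sset_subset (hA : IsTrominoTiling m n A) :
    Sset A ⊆ ((Mset A).filter fun X => IsDomino X) := by
  classical
  rw [Mset_filter_domino hA, Sset]
  exact Finset.image_subset_image (Finset.filter_subset _ _)

lemma tiles_subset_rect (hA : IsTrominoTiling m n A) {T : Finset (ℕ×ℕ)} (hT : T ∈ A) :
    T ⊆ rect m n := by
  rw [← hA.2.2]
  exact Finset.le_sup (f := id) hT

lemma mset_tiles_subset_rect (hA : IsTrominoTiling m n A) {T : Finset (ℕ×ℕ)}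
    (hT : T ∈ Mset A) : T ⊆ rect m n := by
  rw [← Mset_sup hA]
  exact Finset.le_sup (f := id) hT

end
end Trom


/-- the number of tromino tilings of R(m,n) is at most
2^(mn/3) times the number of monodic tilings of R(m,n). -/
theorem tromino_le_monodic (m n : ℕ) (hm : 0 < m) (hn : 0 < n) (h3 : 3 ∣ m * n) :
    Set.ncard {𝒯 : Finset (Finset (ℕ × ℕ)) | IsTrominoTiling m n 𝒯} ≤
      2 ^ (m * n / 3) *
        Set.ncard {𝒯 : Finset (Finset (ℕ × ℕ)) | IsMonodicTiling m n 𝒯} := by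
  classical
  set 𝔗 : Finset (Finset (Finset (ℕ × ℕ))) :=
    ((rect m n).powerset.powerset).filter (IsTrominoTiling m n) with h𝔗
  set 𝔐 : Finset (Finset (Finset (ℕ × ℕ))) :=
    ((rect m n).powerset.powerset).filter (IsMonodicTiling m n) with h𝔐
  have hts : {𝒯 : Finset (Finset (ℕ × ℕ)) | IsTrominoTiling m n 𝒯} = ↑𝔗 := by
    ext 𝒯
    simp only [Set.mem_setOf_eq, Finset.coe_filter, h𝔗, Finset.mem_powerset]
    constructor
    · intro h
      exact ⟨fun T hT => Finset.mem_powerset.mpr (Trom.tiles_subset_rect h hT), h⟩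
    · exact fun h => h.2
  have hms : {𝒯 : Finset (Finset (ℕ × ℕ)) | IsMonodicTiling m n 𝒯} = ↑𝔐 := by
    ext 𝒯
    simp only [Set.mem_setOf_eq, Finset.coe_filter, h𝔐, Finset.mem_powerset]
    constructor
    · intro h
      refine ⟨fun T hT => Finset.mem_powerset.mpr ?_, h⟩
      rw [← h.2.2.1]
      exact Finset.le_sup (f := id) hT
    · exact fun h => h.2
  rw [hts, hms, Set.ncard_coe_finset, Set.ncard_coe_finset]
  set P : Finset (Finset (Finset (ℕ × ℕ)) × Finset (Finset (ℕ × ℕ))) :=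
    𝔐.biUnion (fun M => {M} ×ˢ (M.filter fun X => IsDomino X).powerset) with hP
  have hinj : 𝔗.card ≤ P.card := by
    apply Finset.card_le_card_of_injOn (fun A => (Trom.Mset A, Trom.Sset A))
    · intro A hA'
      have hA : IsTrominoTiling m n A := (Finset.mem_filter.mp hA').2
      simp only [hP, Finset.mem_coe, Finset.mem_biUnion]
      refine ⟨Trom.Mset A, ?_, ?_⟩
      · rw [h𝔐, Finset.mem_filter, Finset.mem_powerset]
        exact ⟨fun T hT => Finset.mem_powerset.mpr (Trom.mset_tiles_subset_rect hA hT),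
          Trom.Mset_monodic hA⟩
      · rw [Finset.mem_product]
        exact ⟨Finset.mem_singleton_self _,
          Finset.mem_powerset.mpr (Trom.Sset_subset hA)⟩
    · intro A hA' B hB' h
      simp only [Prod.mk.injEq] at h
      exact Trom.eq_of_MS (Finset.mem_filter.mp hA').2 (Finset.mem_filter.mp hB').2 h.1 h.2
  have hcard : P.card = 2 ^ (m * n / 3) * 𝔐.card := by
    rw [hP, Finset.card_biUnion]
    · rw [Finset.sum_congr rfl (g := fun _ => 2 ^ (m * n / 3)) ?_, Finset.sum_const,
        smul_eq_mul, mul_comm]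
      intro M hM
      have hmono : IsMonodicTiling m n M := (Finset.mem_filter.mp hM).2
      rw [Finset.card_product, Finset.card_singleton, Finset.card_powerset, one_mul,
        hmono.2.2.2.1]
    · intro M1 h1 M2 h2 hne
      rw [Function.onFun, Finset.disjoint_left]
      intro p hp1 hp2
      rw [Finset.mem_product, Finset.mem_singleton] at hp1 hp2
      exact hne (hp1.1.symm.trans hp2.1)
  omega
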